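/- Let (r₁,S₁),…,(r_N,S_N) be i.i.d. pairs where rᵢ ∈ {0,1} with P(rᵢ=1) = p ∈ (0,1] and Sᵢ is a real-valued (or ℝ^d-valued) random variable, and let K = Σᵢ rᵢ. For any f: {1,…,N} → ℝ, with the estimator ĝ = f(K)·Σᵢ rᵢSᵢ (set to 0 when K = 0), one has E[ĝ] = (Σ_{m=0}^{N−1} N f(m+1) C(N−1,m) p^m (1−p)^{N−1−m}) · E[r₁S₁]. -/

import Mathlib

open MeasureTheory ProbabilityTheory
open Finset

lemma binom_expectation_aux {Ω : Type*} [MeasurableSpace Ω] (μ : Measure Ω)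
    [IsProbabilityMeasure μ] {ι : Type*} [DecidableEq ι] (J : Finset ι) (r : ι → Ω → ℝ)
    (hmeas : ∀ j, Measurable (r j))
    (hindep : iIndepFun r μ)
    (p : ℝ) (hp0 : 0 ≤ p) (hp1 : p ≤ 1)
    (hp : ∀ j, μ {ω | r j ω = 1} = ENNReal.ofReal p)
    (g : ℕ → ℝ) :
    ∫ ω, g ((J.filter (fun j => r j ω = 1)).card) ∂μ
      = ∑ m ∈ Finset.range (J.card + 1),
          g m * (J.card.choose m : ℝ) * p ^ m * (1 - p) ^ (J.card - m) := by
  classical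
  set q : ℝ := 1 - p with hq
  have hq0 : 0 ≤ q := by simp [hq]; linarith
  set E : Finset ι → Set Ω :=
    fun A => ⋂ j ∈ J, (if j ∈ A then r j ⁻¹' {1} else (r j ⁻¹' {1})ᶜ) with hE
  have hEmeas : ∀ A, MeasurableSet (E A) := by
    intro A
    refine MeasurableSet.biInter J.countable_toSet (fun j _ => ?_)
    split_ifs
    · exact hmeas j (measurableSet_singleton 1)
    · exact (hmeas j (measurableSet_singleton 1)).compl
  have hmemiff : ∀ (A : Finset ι) (ω : Ω), ω ∈ E A ↔ ∀ j ∈ J, (r j ω = 1 ↔ j ∈ A) := by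
    intro A ω
    rw [hE]
    simp only [Set.mem_iInter₂]
    refine forall₂_congr fun j hj => ?_
    by_cases hA : j ∈ A <;> simp [hA]
  have hfilter : ∀ (A : Finset ι), A ⊆ J →
      ∀ ω, (J.filter (fun j => r j ω = 1) = A ↔ ω ∈ E A) := by
    intro A hAJ ω
    rw [hmemiff]
    constructor
    · intro h j hj
      constructor
      · intro hr; rw [← h]; exact mem_filter.2 ⟨hj, hr⟩
      · intro hA
        exact (mem_filter.1 (show j ∈ J.filter (fun j => r j ω = 1) by rw [h]; exact hA)).2
    · intro h
      ext x
      simp only [mem_filter]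
      constructor
      · rintro ⟨hxJ, hr⟩; exact (h x hxJ).1 hr
      · intro hxA; exact ⟨hAJ hxA, (h x (hAJ hxA)).2 hxA⟩
  have hmeasE : ∀ (A : Finset ι), A ⊆ J →
      μ (E A) = ENNReal.ofReal p ^ A.card * ENNReal.ofReal q ^ (J.card - A.card) := by
    intro A hAJ
    have hbi := hindep.meas_biInter (S := J)
      (s := fun j => if j ∈ A then r j ⁻¹' {1} else (r j ⁻¹' {1})ᶜ) ?_
    · rw [hE]
      rw [hbi]
      have hterm : ∀ j ∈ J, μ (if j ∈ A then r j ⁻¹' {1} else (r j ⁻¹' {1})ᶜ)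
          = if j ∈ A then ENNReal.ofReal p else ENNReal.ofReal q := by
        intro j _
        by_cases hA : j ∈ A <;> simp only [hA, if_true, if_false]
        · exact hp j
        · rw [measure_compl (hmeas j (measurableSet_singleton 1)) (measure_ne_top μ _),
            measure_univ]
          have : (r j ⁻¹' {1} : Set Ω) = {ω | r j ω = 1} := rfl
          rw [this, hp j, hq, ENNReal.ofReal_sub 1 hp0, ENNReal.ofReal_one]
      rw [Finset.prod_congr rfl hterm, ← Finset.prod_sdiff hAJ]
      have h1 : ∏ j ∈ A, (if j ∈ A then ENNReal.ofReal p else ENNReal.ofReal q)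
          = ENNReal.ofReal p ^ A.card := by
        rw [Finset.prod_congr rfl (fun j hj => if_pos hj), Finset.prod_const]
      have h2 : ∏ j ∈ J \ A, (if j ∈ A then ENNReal.ofReal p else ENNReal.ofReal q)
          = ENNReal.ofReal q ^ (J.card - A.card) := by
        rw [Finset.prod_congr rfl (fun j hj => if_neg (Finset.mem_sdiff.1 hj).2),
          Finset.prod_const, Finset.card_sdiff_of_subset hAJ]
      rw [h1, h2, mul_comm]
    · intro j _
      by_cases hA : j ∈ A
      · simp only [hA, if_true]
        exact ⟨{1}, measurableSet_singleton 1, rfl⟩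
      · simp only [hA, if_false]
        exact ⟨({1} : Set ℝ)ᶜ, (measurableSet_singleton 1).compl, rfl⟩
  have hpt : ∀ ω, g ((J.filter (fun j => r j ω = 1)).card)
      = ∑ A ∈ J.powerset, Set.indicator (E A) (fun _ => g A.card) ω := by
    intro ω
    rw [Finset.sum_eq_single (J.filter (fun j => r j ω = 1))]
    · rw [Set.indicator_of_mem
        ((hfilter _ (filter_subset _ _) ω).1 rfl)]
    · intro A hA hne
      apply Set.indicator_of_notMem
      intro hmem
      exact hne ((hfilter A (mem_powerset.1 hA) ω).2 hmem).symm
    · intro hnot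
      exact absurd (mem_powerset.2 (filter_subset _ _)) hnot
  calc ∫ ω, g ((J.filter (fun j => r j ω = 1)).card) ∂μ
      = ∫ ω, ∑ A ∈ J.powerset, Set.indicator (E A) (fun _ => g A.card) ω ∂μ := by
        exact integral_congr_ae (Filter.Eventually.of_forall hpt)
    _ = ∑ A ∈ J.powerset, ∫ ω, Set.indicator (E A) (fun _ => g A.card) ω ∂μ :=
        integral_finset_sum _ (fun A _ => (integrable_const _).indicator (hEmeas A))
    _ = ∑ A ∈ J.powerset, g A.card * (p ^ A.card * q ^ (J.card - A.card)) := by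
        refine Finset.sum_congr rfl fun A hA => ?_
        rw [integral_indicator_const _ (hEmeas A), measureReal_def, hmeasE A (mem_powerset.1 hA), smul_eq_mul,
          ENNReal.toReal_mul, ENNReal.toReal_pow, ENNReal.toReal_pow,
          ENNReal.toReal_ofReal hp0, ENNReal.toReal_ofReal hq0]
        ring
    _ = ∑ m ∈ Finset.range (J.card + 1), ∑ A ∈ Finset.powersetCard m J,
          g A.card * (p ^ A.card * q ^ (J.card - A.card)) := Finset.sum_powerset _ _
    _ = ∑ m ∈ Finset.range (J.card + 1),
          g m * (J.card.choose m : ℝ) * p ^ m * (1 - p) ^ (J.card - m) := by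
        refine Finset.sum_congr rfl fun m _ => ?_
        rw [Finset.sum_congr rfl
          (fun A hA => by rw [(Finset.mem_powersetCard.1 hA).2] :
            ∀ A ∈ Finset.powersetCard m J,
              g A.card * (p ^ A.card * q ^ (J.card - A.card))
                = g m * (p ^ m * q ^ (J.card - m))),
          Finset.sum_const, Finset.card_powersetCard, nsmul_eq_mul, hq]
        ring


/-- Bernstein representation of K-only estimators: for i.i.d. pairs `(rᵢ,Sᵢ)` with
`rᵢ ∈ {0,1}`, `P(rᵢ = 1) = p`, and `K = Σᵢ rᵢ`, the estimator `ĝ = f(K)·Σᵢ rᵢSᵢ`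
(zero when `K = 0`, ensured by `f 0 = 0` being irrelevant since the sum vanishes)
satisfies `E[ĝ] = (Σ_m N f(m+1) C(N-1,m) p^m (1-p)^{N-1-m})·E[r₁S₁]`. -/
theorem bernstein_representation (N : ℕ) (hN : 0 < N) (p : ℝ) (hp0 : 0 < p) (hp1 : p ≤ 1)
    {Ω : Type*} [MeasurableSpace Ω] (μ : Measure Ω) [IsProbabilityMeasure μ]
    (r S : Fin N → Ω → ℝ)
    (hrmeas : ∀ i, Measurable (r i)) (hSmeas : ∀ i, Measurable (S i))
    (hr01 : ∀ i ω, r i ω = 0 ∨ r i ω = 1)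
    (hp : ∀ i, μ {ω | r i ω = 1} = ENNReal.ofReal p)
    (hiid : iIndepFun (fun i ω => (r i ω, S i ω)) μ)
    (hident : ∀ i, IdentDistrib (fun ω => (r i ω, S i ω))
        (fun ω => (r ⟨0, hN⟩ ω, S ⟨0, hN⟩ ω)) μ μ)
    (f : ℕ → ℝ)
    (hint : Integrable (fun ω =>
        f (Finset.univ.filter (fun i => r i ω = 1)).card * ∑ i, r i ω * S i ω) μ)
    (hint0 : Integrable (fun ω => r ⟨0, hN⟩ ω * S ⟨0, hN⟩ ω) μ) :
    ∫ ω, f (Finset.univ.filter (fun i => r i ω = 1)).card * ∑ i, r i ω * S i ω ∂μ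
      = (∑ m ∈ Finset.range N,
            (N : ℝ) * f (m + 1) * ((N - 1).choose m : ℝ) * p ^ m * (1 - p) ^ (N - 1 - m))
        * ∫ ω, r ⟨0, hN⟩ ω * S ⟨0, hN⟩ ω ∂μ := by
  classical
  have hXmeas : ∀ i, Measurable (fun ω => (r i ω, S i ω)) :=
    fun i => (hrmeas i).prodMk (hSmeas i)
  -- the r's are independent
  have hrindep : iIndepFun r μ :=
    hiid.comp (fun _ => Prod.fst) (fun _ => measurable_fst)
  set M : Fin N → Ω → ℕ :=
    fun i ω => ((Finset.univ.erase i).filter (fun j => r j ω = 1)).card with hM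
  -- pointwise identity
  have hpt : ∀ ω, f (Finset.univ.filter (fun i => r i ω = 1)).card * ∑ i, r i ω * S i ω
      = ∑ i, f (1 + M i ω) * (r i ω * S i ω) := by
    intro ω
    rw [Finset.mul_sum]
    refine Finset.sum_congr rfl fun i _ => ?_
    rcases hr01 i ω with h0 | h1
    · rw [h0]; ring
    · congr 2
      have huniv : (Finset.univ : Finset (Fin N)) = insert i (Finset.univ.erase i) :=
        (Finset.insert_erase (mem_univ i)).symm
      rw [huniv, Finset.filter_insert, if_pos h1,
        Finset.card_insert_of_notMem (fun hmem => (mem_erase.1 (mem_filter.1 hmem).1).1 rfl)]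
      simp only [hM]
      omega
  -- measurability of M and of the bounded factor
  have hMmeas : ∀ i, Measurable (M i) := by
    intro i
    have : M i = fun ω => ∑ j ∈ Finset.univ.erase i, if r j ω = 1 then 1 else 0 := by
      funext ω; rw [hM]; exact Finset.card_filter _ _
    rw [this]
    exact Finset.measurable_sum _ (fun j _ =>
      Measurable.ite (hrmeas j (measurableSet_singleton 1)) measurable_const measurable_const)
  have hgmeas : ∀ i, Measurable (fun ω => f (1 + M i ω)) := fun i =>
    (measurable_from_top (f := fun n => f (1 + n))).comp (hMmeas i)
  -- the bound
  set C : ℝ := ∑ m ∈ Finset.range (N + 1), |f m| with hC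
  have hbound : ∀ i ω, ‖f (1 + M i ω)‖ ≤ C := by
    intro i ω
    rw [Real.norm_eq_abs]
    refine Finset.single_le_sum (f := fun m => |f m|) (fun m _ => abs_nonneg _) ?_
    have h1 : ((Finset.univ.erase i).filter (fun j => r j ω = 1)).card ≤ N - 1 := by
      refine le_trans (Finset.card_filter_le _ _) (le_of_eq ?_)
      rw [Finset.card_erase_of_mem (mem_univ i), Finset.card_univ, Fintype.card_fin]
    simp only [hM, Finset.mem_range]
    refine lt_of_le_of_lt (Nat.add_le_add_left h1 1) ?_
    omega
  -- integrability of each r i * S i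
  have hih : ∀ i, Integrable (fun ω => r i ω * S i ω) μ := by
    intro i
    have hcomp : IdentDistrib (fun ω => r i ω * S i ω)
        (fun ω => r ⟨0, hN⟩ ω * S ⟨0, hN⟩ ω) μ μ :=
      (hident i).comp (measurable_fst.mul measurable_snd)
    exact hcomp.integrable_iff.mpr hint0
  have hieq : ∀ i, ∫ ω, r i ω * S i ω ∂μ = ∫ ω, r ⟨0, hN⟩ ω * S ⟨0, hN⟩ ω ∂μ := by
    intro i
    exact ((hident i).comp (measurable_fst.mul measurable_snd)).integral_eq
  -- integrability of each summand
  have hgint : ∀ i, Integrable (fun ω => f (1 + M i ω)) μ := by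
    intro i
    exact (integrable_const C).mono' (hgmeas i).aestronglyMeasurable
      (Filter.Eventually.of_forall (hbound i))
  have hint_i : ∀ i, Integrable (fun ω => f (1 + M i ω) * (r i ω * S i ω)) μ := by
    intro i
    exact (hih i).bdd_mul (hgmeas i).aestronglyMeasurable (Filter.Eventually.of_forall (hbound i))
  -- independence
  have hindepgh : ∀ i, IndepFun (fun ω => f (1 + M i ω)) (fun ω => r i ω * S i ω) μ := by
    intro i
    set J : Finset (Fin N) := Finset.univ.erase i with hJ
    have hdisj : Disjoint J ({i} : Finset (Fin N)) :=
      Finset.disjoint_singleton_right.2 (Finset.notMem_erase i _)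
    have hbase := hiid.indepFun_finset J {i} hdisj hXmeas
    set φ : (J → ℝ × ℝ) → ℝ :=
      fun v => f (1 + ∑ j : J, if (v j).1 = 1 then 1 else 0) with hφ
    set ψ : (({i} : Finset (Fin N)) → ℝ × ℝ) → ℝ :=
      fun w => (w ⟨i, Finset.mem_singleton_self i⟩).1 * (w ⟨i, Finset.mem_singleton_self i⟩).2
      with hψ
    have hφm : Measurable φ := by
      refine (measurable_from_top (f := fun n => f (1 + n))).comp ?_
      refine Finset.measurable_sum _ (fun j _ => ?_)
      exact Measurable.ite ((measurable_fst.comp (measurable_pi_apply j))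
        (measurableSet_singleton 1)) measurable_const measurable_const
    have hψm : Measurable ψ :=
      ((measurable_pi_apply _).fst).mul ((measurable_pi_apply _).snd)
    have hcomp := hbase.comp hφm hψm
    have h1 : (φ ∘ fun a (j : J) => (r (j : Fin N) a, S (j : Fin N) a)) =
        fun ω => f (1 + M i ω) := by
      funext a
      simp only [Function.comp_apply, hφ, hM]
      congr 2
      rw [Finset.card_filter]
      exact (Finset.sum_coe_sort J (fun j => if r j a = 1 then 1 else 0))
    have h2 : (ψ ∘ fun a (k : ({i} : Finset (Fin N))) => (r (k : Fin N) a, S (k : Fin N) a)) =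
        fun ω => r i ω * S i ω := by
      funext a; rfl
    rw [h1, h2] at hcomp
    exact hcomp
  -- the expectation of the binomial factor
  have hgval : ∀ i, ∫ ω, f (1 + M i ω) ∂μ
      = ∑ m ∈ Finset.range N,
          f (1 + m) * ((N - 1).choose m : ℝ) * p ^ m * (1 - p) ^ (N - 1 - m) := by
    intro i
    have := binom_expectation_aux μ (Finset.univ.erase i) r hrmeas hrindep p hp0.le hp1 hp
      (fun m => f (1 + m))
    have hcard : (Finset.univ.erase i).card = N - 1 := by
      rw [Finset.card_erase_of_mem (mem_univ i), Finset.card_univ, Fintype.card_fin]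
    rw [hcard, Nat.sub_add_cancel hN] at this
    simp only [hM]
    exact this
  -- assembly
  calc ∫ ω, f (Finset.univ.filter (fun i => r i ω = 1)).card * ∑ i, r i ω * S i ω ∂μ
      = ∫ ω, ∑ i, f (1 + M i ω) * (r i ω * S i ω) ∂μ :=
        integral_congr_ae (Filter.Eventually.of_forall hpt)
    _ = ∑ i, ∫ ω, f (1 + M i ω) * (r i ω * S i ω) ∂μ :=
        integral_finset_sum _ (fun i _ => hint_i i)
    _ = ∑ _i : Fin N, (∑ m ∈ Finset.range N,
          f (1 + m) * ((N - 1).choose m : ℝ) * p ^ m * (1 - p) ^ (N - 1 - m))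
          * ∫ ω, r ⟨0, hN⟩ ω * S ⟨0, hN⟩ ω ∂μ := by
        refine Finset.sum_congr rfl fun i _ => ?_
        have := (hindepgh i).integral_mul_eq_mul_integral (hgint i).aestronglyMeasurable (hih i).aestronglyMeasurable
        have heq : ∫ ω, f (1 + M i ω) * (r i ω * S i ω) ∂μ
            = (∫ ω, f (1 + M i ω) ∂μ) * ∫ ω, r i ω * S i ω ∂μ := this
        rw [heq, hgval i, hieq i]
    _ = (∑ m ∈ Finset.range N,
            (N : ℝ) * f (m + 1) * ((N - 1).choose m : ℝ) * p ^ m * (1 - p) ^ (N - 1 - m))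
        * ∫ ω, r ⟨0, hN⟩ ω * S ⟨0, hN⟩ ω ∂μ := by
        rw [Finset.sum_const, Finset.card_univ, Fintype.card_fin, nsmul_eq_mul,
          ← mul_assoc, Finset.mul_sum]
        congr 1
        refine Finset.sum_congr rfl fun m _ => ?_
        rw [Nat.add_comm 1 m]
        ring
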